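/- There is no vector v in the lattice D₅ = {x ∈ ℤ⁵ : Σxᵢ even} with v·v = 20 whose orthogonal complement in D₅ has determinant 5, except those whose orthogonal complement is isomorphic to A₄. Precisely: if v ∈ D₅ satisfies v·v = 20 and det(v^⊥) = 5, then v^⊥ ≅ A₄. -/

import Mathlib

open BigOperators

/-- The Euclidean inner product on `Fin 5 → ℤ`. -/
def ip (x y : Fin 5 → ℤ) : ℤ := ∑ i, x i * y i

/-- The orthogonal complement of `v` inside `D₅ = {x ∈ ℤ⁵ : Σxᵢ even}`. -/
def D5perp (v : Fin 5 → ℤ) : Submodule ℤ (Fin 5 → ℤ) where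
  carrier := {x | Even (∑ i, x i) ∧ ip v x = 0}
  add_mem' := by
    rintro a b ⟨ha1, ha2⟩ ⟨hb1, hb2⟩
    constructor
    · simpa [Finset.sum_add_distrib] using ha1.add hb1
    · simp only [ip, Pi.add_apply, mul_add, Finset.sum_add_distrib] at *
      omega
  zero_mem' := by simp [ip]
  smul_mem' := by
    rintro c x ⟨hx1, hx2⟩
    constructor
    · simpa [Finset.mul_sum] using hx1.mul_left c
    · simp only [ip, smul_eq_mul, Pi.smul_apply] at *
      rw [Finset.sum_congr rfl (fun i _ => by ring_nf : ∀ i ∈ Finset.univ,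
        v i * (c * x i) = c * (v i * x i))]
      rw [← Finset.mul_sum, hx2, mul_zero]

/-- The root lattice `A₄ = {x ∈ ℤ⁵ : Σxᵢ = 0}`. -/
def A4 : Submodule ℤ (Fin 5 → ℤ) where
  carrier := {x | ∑ i, x i = 0}
  add_mem' := by
    intro a b ha hb
    simp only [Set.mem_setOf_eq, Pi.add_apply, Finset.sum_add_distrib] at *
    omega
  zero_mem' := by simp
  smul_mem' := by
    intro c x hx
    simp only [Set.mem_setOf_eq, Pi.smul_apply, smul_eq_mul] at *
    rw [← Finset.mul_sum, hx, mul_zero]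

lemma mem_D5perp (v x : Fin 5 → ℤ) : x ∈ D5perp v ↔ Even (∑ i, x i) ∧ ip v x = 0 := Iff.rfl
lemma mem_A4 (x : Fin 5 → ℤ) : x ∈ A4 ↔ ∑ i, x i = 0 := Iff.rfl

lemma ip_comm (x y : Fin 5 → ℤ) : ip x y = ip y x := by
  unfold ip; exact Finset.sum_congr rfl fun i _ => mul_comm _ _

lemma ip_sum_left (a : Fin 4 → ℤ) (c : Fin 4 → Fin 5 → ℤ) (y : Fin 5 → ℤ) :
    ip (∑ k, a k • c k) y = ∑ k, a k * ip (c k) y := by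
  unfold ip
  simp only [Finset.sum_apply, Pi.smul_apply, smul_eq_mul, Finset.sum_mul, Finset.mul_sum]
  rw [Finset.sum_comm]
  exact Finset.sum_congr rfl fun k _ => Finset.sum_congr rfl fun i _ => by ring

lemma ip_sum_sum (a b : Fin 4 → ℤ) (c : Fin 4 → Fin 5 → ℤ) :
    ip (∑ k, a k • c k) (∑ l, b l • c l) = ∑ k, ∑ l, a k * b l * ip (c k) (c l) := by
  rw [ip_sum_left]
  refine Finset.sum_congr rfl fun k _ => ?_
  rw [ip_comm, ip_sum_left, Finset.mul_sum]
  exact Finset.sum_congr rfl fun l _ => by rw [ip_comm]; ring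

lemma badcase (N : Submodule ℤ (Fin 5 → ℤ)) (c : Fin 4 → Fin 5 → ℤ)
    (hspan : ∀ x : N, ∃ a : Fin 4 → ℤ, (x : Fin 5 → ℤ) = ∑ k, a k • c k)
    (D : ℤ) (hD : (Matrix.of fun k l => ip (c k) (c l)).det = D)
    (hDval : D = 80 ∨ D = 20)
    (b : Module.Basis (Fin 4) ℤ N)
    (h5 : ((Matrix.of fun i j => ip (b i : Fin 5 → ℤ) (b j : Fin 5 → ℤ)).det).natAbs = 5) :
    False := by
  choose P hP using fun i => hspan (b i)
  have hgram : (Matrix.of fun i j => ip (b i : Fin 5 → ℤ) (b j : Fin 5 → ℤ))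
      = (Matrix.of P) * (Matrix.of fun k l => ip (c k) (c l)) * Matrix.transpose (Matrix.of P) := by
    ext i j
    rw [Matrix.mul_apply]
    simp only [Matrix.of_apply, Matrix.mul_apply, Matrix.transpose_apply]
    rw [hP i, hP j, ip_sum_sum]
    rw [Finset.sum_comm]
    refine Finset.sum_congr rfl fun l _ => ?_
    rw [Finset.sum_mul]
    exact Finset.sum_congr rfl fun k _ => by ring
  rw [hgram] at h5
  rw [Matrix.det_mul, Matrix.det_mul, Matrix.det_transpose, hD] at h5
  set p := (Matrix.of P).det with hp
  have hq : p * D * p = D * (p * p) := by ring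
  have hsq : 0 ≤ p * p := mul_self_nonneg p
  rcases Int.natAbs_eq (p * D * p) with h | h <;> rw [h5, hq] at h <;>
    rcases hDval with rfl | rfl <;> omega

section transport

variable (π : Equiv.Perm (Fin 5)) (ε : Fin 5 → ℤ) (hε : ∀ i, ε i = 1 ∨ ε i = -1)

/-- Signed permutation as a linear automorphism of `ℤ⁵`. -/
def sp : (Fin 5 → ℤ) ≃ₗ[ℤ] (Fin 5 → ℤ) where
  toFun x := fun i => ε i * x (π i)
  invFun y := fun j => ε (π.symm j) * y (π.symm j)
  map_add' x y := by funext i; simp [mul_add]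
  map_smul' c x := by funext i; simp; ring
  left_inv x := by
    funext j
    simp only [Equiv.apply_symm_apply]
    rcases hε (π.symm j) with h | h <;> rw [h] <;> ring
  right_inv y := by
    funext i
    simp only [Equiv.symm_apply_apply]
    rcases hε i with h | h <;> rw [h] <;> ring

lemma ip_sp (x y : Fin 5 → ℤ) : ip (sp π ε hε x) (sp π ε hε y) = ip x y := by
  unfold ip
  rw [show ∑ i, (sp π ε hε x) i * (sp π ε hε y) i
      = ∑ i, x (π i) * y (π i) from Finset.sum_congr rfl fun i _ => by
        show (ε i * x (π i)) * (ε i * y (π i)) = _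
        rcases hε i with h | h <;> rw [h] <;> ring]
  exact Equiv.sum_comp π fun j => x j * y j

lemma even_sp (x : Fin 5 → ℤ) : Even (∑ i, (sp π ε hε x) i) ↔ Even (∑ i, x i) := by
  have h1 : Even ((∑ i, (sp π ε hε x) i) - ∑ i, x (π i)) := by
    rw [← Finset.sum_sub_distrib]
    refine Finset.even_sum _ fun i _ => ?_
    show Even (ε i * x (π i) - x (π i))
    rcases hε i with h | h <;> rw [h]
    · simp
    · exact ⟨-x (π i), by ring⟩
  rw [Equiv.sum_comp π x] at h1
  exact Int.even_sub.mp h1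

lemma mem_sp (v x : Fin 5 → ℤ) : x ∈ D5perp v ↔ sp π ε hε x ∈ D5perp (sp π ε hε v) := by
  rw [mem_D5perp, mem_D5perp, ip_sp, even_sp]

lemma map_sp (v : Fin 5 → ℤ) :
    (D5perp v).map (sp π ε hε : (Fin 5 → ℤ) →ₗ[ℤ] (Fin 5 → ℤ)) = D5perp (sp π ε hε v) := by
  ext y
  rw [Submodule.mem_map]
  constructor
  · rintro ⟨x, hx, rfl⟩
    exact (mem_sp π ε hε v x).mp hx
  · intro hy
    refine ⟨(sp π ε hε).symm y, ?_, (sp π ε hε).apply_symm_apply y⟩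
    rw [mem_sp π ε hε v, (sp π ε hε).apply_symm_apply y]
    exact hy

end transport

def cB : Fin 4 → Fin 5 → ℤ := ![![1,-1,0,0,0],![0,1,-1,0,0],![0,0,1,-1,0],![-2,-2,-2,-2,2]]
def cC : Fin 4 → Fin 5 → ℤ := ![![2,0,0,0,0],![0,1,-1,0,0],![0,3,0,-1,0],![0,0,0,1,-1]]
def cD : Fin 4 → Fin 5 → ℤ := ![![1,-1,0,0,0],![0,1,-1,0,0],![0,0,2,0,0],![0,0,1,-2,1]]

lemma detB : (Matrix.of fun k l => ip (cB k) (cB l)).det = 80 := by decide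
lemma detC : (Matrix.of fun k l => ip (cC k) (cC l)).det = 80 := by decide
lemma detD : (Matrix.of fun k l => ip (cD k) (cD l)).det = 20 := by decide

lemma spanB (x : Fin 5 → ℤ) (hev : Even (∑ i, x i)) (hip : ip ![1,1,1,1,4] x = 0) :
    ∃ a : Fin 4 → ℤ, x = ∑ k, a k • cB k := by
  simp only [ip, Fin.sum_univ_five, Matrix.cons_val_zero, Matrix.cons_val_one, Matrix.head_cons,
    Matrix.cons_val_two, Matrix.tail_cons, Matrix.cons_val_three, Matrix.cons_val_four] at hip
  obtain ⟨m, hm⟩ := hev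
  simp only [Fin.sum_univ_five] at hm
  refine ⟨![x 0 + x 4, x 0 + x 1 + 2 * x 4, x 0 + x 1 + x 2 + 3 * x 4, x 4 / 2], ?_⟩
  funext i
  simp only [Fin.sum_univ_four, cB, Finset.sum_apply, Pi.smul_apply, smul_eq_mul]
  fin_cases i <;>
    simp [Matrix.cons_val_zero, Matrix.cons_val_succ, Matrix.vecHead, Matrix.vecTail] <;> omega

lemma spanC (x : Fin 5 → ℤ) (hev : Even (∑ i, x i)) (hip : ip ![0,1,1,3,3] x = 0) :
    ∃ a : Fin 4 → ℤ, x = ∑ k, a k • cC k := by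
  simp only [ip, Fin.sum_univ_five, Matrix.cons_val_zero, Matrix.cons_val_one, Matrix.head_cons,
    Matrix.cons_val_two, Matrix.tail_cons, Matrix.cons_val_three, Matrix.cons_val_four] at hip
  obtain ⟨m, hm⟩ := hev
  simp only [Fin.sum_univ_five] at hm
  refine ⟨![x 0 / 2, -x 2, -x 3 - x 4, -x 4], ?_⟩
  funext i
  simp only [Fin.sum_univ_four, cC, Finset.sum_apply, Pi.smul_apply, smul_eq_mul]
  fin_cases i <;>
    simp [Matrix.cons_val_zero, Matrix.cons_val_succ, Matrix.vecHead, Matrix.vecTail] <;> omega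

lemma spanD (x : Fin 5 → ℤ) (hev : Even (∑ i, x i)) (hip : ip ![0,0,0,2,4] x = 0) :
    ∃ a : Fin 4 → ℤ, x = ∑ k, a k • cD k := by
  simp only [ip, Fin.sum_univ_five, Matrix.cons_val_zero, Matrix.cons_val_one, Matrix.head_cons,
    Matrix.cons_val_two, Matrix.tail_cons, Matrix.cons_val_three, Matrix.cons_val_four] at hip
  obtain ⟨m, hm⟩ := hev
  simp only [Fin.sum_univ_five] at hm
  refine ⟨![x 0, x 0 + x 1, (x 0 + x 1 + x 2 - x 4) / 2, x 4], ?_⟩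
  funext i
  simp only [Fin.sum_univ_four, cD, Finset.sum_apply, Pi.smul_apply, smul_eq_mul]
  fin_cases i <;>
    simp [Matrix.cons_val_zero, Matrix.cons_val_succ, Matrix.vecHead, Matrix.vecTail] <;> omega

lemma classify (v : Fin 5 → ℤ) (hvv : ip v v = 20) :
    ∃ (π : Equiv.Perm (Fin 5)) (ε : Fin 5 → ℤ), (∀ i, ε i = 1 ∨ ε i = -1) ∧
      ((fun i => ε i * v (π i)) = ![2,2,2,2,2] ∨
       (fun i => ε i * v (π i)) = ![1,1,1,1,4] ∨
       (fun i => ε i * v (π i)) = ![0,1,1,3,3] ∨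
       (fun i => ε i * v (π i)) = ![0,0,0,2,4]) := by
  set f : Fin 5 → ℤ := fun i => |v i| with hf
  set π := Tuple.sort f with hπ
  refine ⟨π, fun i => if v (π i) < 0 then -1 else 1, fun i => by dsimp only; split <;> simp, ?_⟩
  have hw : ∀ i, (if v (π i) < 0 then (-1:ℤ) else 1) * v (π i) = |v (π i)| := by
    intro i
    split
    · rw [abs_of_neg (by assumption)]; ring
    · rw [abs_of_nonneg (by omega)]; ring
  have hfun : (fun i => (if v (π i) < 0 then (-1:ℤ) else 1) * v (π i)) = fun i => |v (π i)| :=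
    funext hw
  rw [hfun]
  have hmono : Monotone (f ∘ π) := Tuple.monotone_sort f
  have h01 : |v (π 0)| ≤ |v (π 1)| := hmono (show (0:Fin 5) ≤ 1 by decide)
  have h12 : |v (π 1)| ≤ |v (π 2)| := hmono (show (1:Fin 5) ≤ 2 by decide)
  have h23 : |v (π 2)| ≤ |v (π 3)| := hmono (show (2:Fin 5) ≤ 3 by decide)
  have h34 : |v (π 3)| ≤ |v (π 4)| := hmono (show (3:Fin 5) ≤ 4 by decide)
  have hsum : ∑ i, |v (π i)| * |v (π i)| = 20 := by
    calc ∑ i, |v (π i)| * |v (π i)| = ∑ i, v (π i) * v (π i) :=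
          Finset.sum_congr rfl fun i _ => abs_mul_abs_self _
      _ = ∑ j, v j * v j := Equiv.sum_comp π fun j => v j * v j
      _ = 20 := hvv
  simp only [Fin.sum_univ_five] at hsum
  have hnn : 0 ≤ |v (π 0)| := abs_nonneg _
  have hb4 : |v (π 4)| ≤ 4 := by
    have n0 := abs_nonneg (v (π 0))
    have n1 := abs_nonneg (v (π 1))
    have n2 := abs_nonneg (v (π 2))
    have n3 := abs_nonneg (v (π 3))
    have n4 := abs_nonneg (v (π 4))
    nlinarith
  obtain ⟨a0, a1, a2, a3, a4, e0, e1, e2, e3, e4⟩ :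
      ∃ a0 a1 a2 a3 a4, |v (π 0)| = a0 ∧ |v (π 1)| = a1 ∧ |v (π 2)| = a2 ∧ |v (π 3)| = a3 ∧
        |v (π 4)| = a4 := ⟨_, _, _, _, _, rfl, rfl, rfl, rfl, rfl⟩
  simp only [e0, e1, e2, e3, e4] at h01 h12 h23 h34 hsum hnn hb4
  have key : (a0 = 2 ∧ a1 = 2 ∧ a2 = 2 ∧ a3 = 2 ∧ a4 = 2) ∨
      (a0 = 1 ∧ a1 = 1 ∧ a2 = 1 ∧ a3 = 1 ∧ a4 = 4) ∨
      (a0 = 0 ∧ a1 = 1 ∧ a2 = 1 ∧ a3 = 3 ∧ a4 = 3) ∨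
      (a0 = 0 ∧ a1 = 0 ∧ a2 = 0 ∧ a3 = 2 ∧ a4 = 4) := by
    have hnn1 : 0 ≤ a1 := le_trans hnn h01
    have hnn2 : 0 ≤ a2 := le_trans hnn1 h12
    have hnn3 : 0 ≤ a3 := le_trans hnn2 h23
    have hnn4 : 0 ≤ a4 := le_trans hnn3 h34
    interval_cases a4 <;> interval_cases a3 <;> interval_cases a2 <;> interval_cases a1 <;>
      interval_cases a0 <;> omega
  rcases key with ⟨k0,k1,k2,k3,k4⟩ | ⟨k0,k1,k2,k3,k4⟩ | ⟨k0,k1,k2,k3,k4⟩ | ⟨k0,k1,k2,k3,k4⟩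
  · left
    funext i; fin_cases i <;> simp_all
  · right; left
    funext i; fin_cases i <;> simp_all
  · right; right; left
    funext i; fin_cases i <;> simp_all
  · right; right; right
    funext i; fin_cases i <;> simp_all

/-- If `v ∈ D₅` has `v·v = 20` and its orthogonal complement in `D₅`
has determinant `5`, then that complement is isomorphic, as a lattice, to `A₄`. -/
theorem stmt13 (v : Fin 5 → ℤ) (hvD5 : Even (∑ i, v i)) (hvv : ip v v = 20)
    (hdet : ∃ b : Module.Basis (Fin 4) ℤ (D5perp v),
      ((Matrix.of fun i j => ip (b i : Fin 5 → ℤ) (b j : Fin 5 → ℤ)).det).natAbs = 5) :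
    ∃ e : (D5perp v) ≃ₗ[ℤ] A4,
      ∀ x y : D5perp v, ip (x : Fin 5 → ℤ) (y : Fin 5 → ℤ)
        = ip (e x : Fin 5 → ℤ) (e y : Fin 5 → ℤ) := by
  obtain ⟨π, ε, hε, hcase⟩ := classify v hvv
  have hTv : sp π ε hε v = fun i => ε i * v (π i) := rfl
  have hmap := map_sp π ε hε v
  let E : (D5perp v) ≃ₗ[ℤ] (D5perp (sp π ε hε v)) :=
    ((sp π ε hε).submoduleMap (D5perp v)).trans (LinearEquiv.ofEq _ _ hmap)
  have hE : ∀ x : D5perp v, (E x : Fin 5 → ℤ) = sp π ε hε (x : Fin 5 → ℤ) := fun x => rfl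
  obtain ⟨b, hb⟩ := hdet
  have hb' : ((Matrix.of fun i j =>
      ip ((b.map E) i : Fin 5 → ℤ) ((b.map E) j : Fin 5 → ℤ)).det).natAbs = 5 := by
    have heq : (Matrix.of fun i j =>
        ip ((b.map E) i : Fin 5 → ℤ) ((b.map E) j : Fin 5 → ℤ))
        = Matrix.of fun i j => ip (b i : Fin 5 → ℤ) (b j : Fin 5 → ℤ) := by
      ext i j
      simp only [Matrix.of_apply, Module.Basis.map_apply]
      rw [hE (b i), hE (b j), ip_sp]
    rw [heq]
    exact hb
  rcases hcase with hv | hv | hv | hv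
  · -- good case
    have hveq : sp π ε hε v = ![2,2,2,2,2] := hTv.trans hv
    have hA : D5perp (sp π ε hε v) = A4 := by
      rw [hveq]
      ext x
      rw [mem_D5perp, mem_A4]
      simp only [ip, Fin.sum_univ_five, Matrix.cons_val_zero, Matrix.cons_val_one,
        Matrix.head_cons, Matrix.cons_val_two, Matrix.tail_cons, Matrix.cons_val_three,
        Matrix.cons_val_four, Int.even_iff]
      omega
    refine ⟨E.trans (LinearEquiv.ofEq _ _ hA), fun x y => ?_⟩
    have hcoe : ∀ z : D5perp v,
        ((E.trans (LinearEquiv.ofEq _ _ hA)) z : Fin 5 → ℤ) = sp π ε hε (z : Fin 5 → ℤ) :=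
      fun z => rfl
    rw [hcoe, hcoe, ip_sp]
  · exact absurd hb' (by
      intro h5
      exact badcase _ cB (fun x => spanB x ((mem_D5perp _ _).mp x.2).1
          ((congrArg (fun w => ip w (x : Fin 5 → ℤ)) (hTv.trans hv)).symm.trans
            ((mem_D5perp _ _).mp x.2).2))
        80 detB (Or.inl rfl) (b.map E) h5)
  · exact absurd hb' (by
      intro h5
      exact badcase _ cC (fun x => spanC x ((mem_D5perp _ _).mp x.2).1
          ((congrArg (fun w => ip w (x : Fin 5 → ℤ)) (hTv.trans hv)).symm.trans
            ((mem_D5perp _ _).mp x.2).2))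
        80 detC (Or.inl rfl) (b.map E) h5)
  · exact absurd hb' (by
      intro h5
      exact badcase _ cD (fun x => spanD x ((mem_D5perp _ _).mp x.2).1
          ((congrArg (fun w => ip w (x : Fin 5 → ℤ)) (hTv.trans hv)).symm.trans
            ((mem_D5perp _ _).mp x.2).2))
        20 detD (Or.inr rfl) (b.map E) h5)
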